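/- Let L ≤ Sym(Δ) be a finite transitive 2'-elusive permutation group and let K ≤ S_k be a transitive subgroup with k ≥ 2. Then the wreath product L ≀ K acting on Δ^k via the product action is also 2'-elusive. -/

import Mathlib

/-- Auxiliary "cycle product" for the wreath product argument:
`wrG F σ n i = F i * F (σ⁻¹ i) * ⋯ * F (σ⁻⁽ⁿ⁻¹⁾ i)`. -/
def wrG {α β : Type*} (F : α → Equiv.Perm β) (σ : Equiv.Perm α) : ℕ → α → Equiv.Perm β
  | 0 => fun _ => 1
  | n + 1 => fun i => F i * wrG F σ n (σ⁻¹ i)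

@[simp] lemma wrG_zero {α β : Type*} (F : α → Equiv.Perm β) (σ : Equiv.Perm α) (i : α) :
    wrG F σ 0 i = 1 := rfl

@[simp] lemma wrG_succ {α β : Type*} (F : α → Equiv.Perm β) (σ : Equiv.Perm α) (n : ℕ) (i : α) :
    wrG F σ (n + 1) i = F i * wrG F σ n (σ⁻¹ i) := rfl

/-- Lemma 3.2: if `L ≤ Sym(Δ)` is a finite transitive 2'-elusive permutation
group and `K ≤ S_k` is transitive with `k ≥ 2`, then the wreath product
`L ≀ K` in its product action on `Δ^k` is 2'-elusive. The elements of `L ≀ K`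
in the product action are the permutations `w` of `Δ^k` of the form
`(w x) i = f i (x (σ⁻¹ i))` with `f : Fin k → L` and `σ ∈ K`. -/
theorem stmt_15 {Δ : Type*} [Finite Δ] (k : ℕ) (hk : 2 ≤ k)
    (L : Subgroup (Equiv.Perm Δ)) (K : Subgroup (Equiv.Perm (Fin k)))
    (hLtrans : MulAction.IsPretransitive L Δ)
    (hKtrans : MulAction.IsPretransitive K (Fin k))
    -- L is 2'-elusive on Δ
    (hLdeg : ∃ q : ℕ, q.Prime ∧ Odd q ∧ q ∣ Nat.card Δ)
    (hLel : ∀ x : L, ∀ q : ℕ, q.Prime → Odd q → orderOf x = q →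
      ∃ δ : Δ, (x : Equiv.Perm Δ) δ = δ) :
    -- the product action of L ≀ K on Δ^k is 2'-elusive
    (∃ q : ℕ, q.Prime ∧ Odd q ∧ q ∣ Nat.card (Fin k → Δ)) ∧
    ∀ w : Equiv.Perm (Fin k → Δ),
      (∃ (f : Fin k → L) (σ : K), ∀ (x : Fin k → Δ) (i : Fin k),
        w x i = (f i : Equiv.Perm Δ) (x (((σ : Equiv.Perm (Fin k)))⁻¹ i))) →
      ∀ q : ℕ, q.Prime → Odd q → orderOf w = q →
        ∃ x : Fin k → Δ, w x = x := by
  obtain ⟨q', hq'p, hq'o, hq'd⟩ := hLdeg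
  have hkne : Nonempty (Fin k) := ⟨⟨0, by omega⟩⟩
  constructor
  · refine ⟨q', hq'p, hq'o, ?_⟩
    have hcard : Nat.card (Fin k → Δ) = Nat.card Δ ^ k := by
      rw [Nat.card_fun]; congr 1; simp
    rw [hcard]
    exact hq'd.trans (dvd_pow_self _ (by omega : k ≠ 0))
  rintro w ⟨f, σ, hw⟩ q hqp hqo hqord
  rcases isEmpty_or_nonempty Δ with hΔ | hΔ
  · exfalso
    have hw1 : w = 1 := Equiv.ext fun x => (IsEmpty.false (x (Classical.arbitrary (Fin k)))).elim
    rw [hw1, orderOf_one] at hqord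
    exact hqp.one_lt.ne' hqord.symm
  have hqpos : 0 < q := hqp.pos
  have hΔ2 : 2 ≤ Nat.card Δ := le_trans hq'p.two_le (Nat.le_of_dvd Nat.card_pos hq'd)
  have hΔnt : Nontrivial Δ := Finite.one_lt_card_iff_nontrivial.mp hΔ2
  set σ' : Equiv.Perm (Fin k) := (σ : Equiv.Perm (Fin k)) with hσ'def
  set F : Fin k → Equiv.Perm Δ := fun i => (f i : Equiv.Perm Δ) with hFdef
  -- Lemma A : iterates of w
  have hA : ∀ (n : ℕ) (x : Fin k → Δ) (i : Fin k),
      (w ^ n) x i = wrG F σ' n i (x ((σ'⁻¹ ^ n) i)) := by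
    intro n
    induction n with
    | zero => intro x i; simp
    | succ n ih =>
      intro x i
      calc (w ^ (n + 1)) x i = w ((w ^ n) x) i := by rw [pow_succ', Equiv.Perm.mul_apply]
        _ = F i (((w ^ n) x) (σ'⁻¹ i)) := hw _ i
        _ = F i (wrG F σ' n (σ'⁻¹ i) (x ((σ'⁻¹ ^ n) (σ'⁻¹ i)))) := by rw [ih]
        _ = wrG F σ' (n + 1) i (x ((σ'⁻¹ ^ (n + 1)) i)) := by
            rw [wrG_succ, Equiv.Perm.mul_apply, pow_succ, Equiv.Perm.mul_apply]
  have hq1 : w ^ q = 1 := hqord ▸ pow_orderOf_eq_one w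
  have hEq : ∀ (x : Fin k → Δ) (i : Fin k), wrG F σ' q i (x ((σ'⁻¹ ^ q) i)) = x i := by
    intro x i
    rw [← hA, hq1, Equiv.Perm.one_apply]
  -- σ' has order dividing q
  have hB : σ'⁻¹ ^ q = 1 := by
    by_contra hne
    obtain ⟨i, hi⟩ : ∃ i, (σ'⁻¹ ^ q) i ≠ i := by
      by_contra h'
      push_neg at h'
      exact hne (Equiv.ext h')
    obtain ⟨a, b, hab⟩ := exists_pair_ne Δ
    have h1 : wrG F σ' q i a = a := hEq (fun _ => a) i
    have h2 : wrG F σ' q i ((Function.update (fun _ => a) i b) ((σ'⁻¹ ^ q) i)) = b := by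
      have := hEq (Function.update (fun _ => a) i b) i
      rwa [Function.update_self] at this
    rw [Function.update_of_ne hi] at h2
    exact hab (h1.symm.trans h2)
  have hσq : σ' ^ q = 1 := by rwa [inv_pow, inv_eq_one] at hB
  -- cycle products of length q are trivial
  have hgq1 : ∀ i : Fin k, wrG F σ' q i = 1 := by
    intro i
    refine Equiv.ext fun a => ?_
    have h := hEq (fun _ => a) i
    simpa using h
  -- on fixed points of σ', wrG is a power
  have hpowfix : ∀ t : Fin k, σ' t = t → ∀ n : ℕ, wrG F σ' n t = F t ^ n := by
    intro t ht
    have ht' : σ'⁻¹ t = t := σ'.injective (by rw [Equiv.Perm.inv_def, Equiv.apply_symm_apply, ht])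
    intro n
    induction n with
    | zero => simp
    | succ n ih => rw [wrG_succ, ht', ih, pow_succ']
  -- recursion along the orbit
  have hD : ∀ (t : Fin k) (n : ℕ),
      wrG F σ' (n + 1) ((σ' ^ (n + 1)) t)
        = F ((σ' ^ (n + 1)) t) * wrG F σ' n ((σ' ^ n) t) := by
    intro t n
    have h1 : σ'⁻¹ ((σ' ^ (n + 1)) t) = (σ' ^ n) t := by
      rw [pow_succ', Equiv.Perm.mul_apply, Equiv.Perm.inv_def, Equiv.symm_apply_apply]
    rw [wrG_succ, h1]
  have hHq : ∀ t : Fin k, wrG F σ' q ((σ' ^ q) t) = 1 := by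
    intro t
    rw [hσq, Equiv.Perm.one_apply]
    exact hgq1 t
  have hFper : ∀ (t : Fin k) (n : ℕ),
      wrG F σ' (n + q) ((σ' ^ (n + q)) t) = wrG F σ' n ((σ' ^ n) t) := by
    intro t n
    induction n with
    | zero => simp [hHq t]
    | succ n ih =>
      rw [show n + 1 + q = (n + q) + 1 from by omega, hD t (n + q), ih]
      have e2 : (σ' ^ ((n + q) + 1)) t = (σ' ^ (n + 1)) t := by
        rw [show (n + q) + 1 = (n + 1) + q from by omega, pow_add, hσq, mul_one]
      rw [e2, hD t n]
  have hFper' : ∀ (t : Fin k) (n c : ℕ),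
      wrG F σ' (n + q * c) ((σ' ^ (n + q * c)) t) = wrG F σ' n ((σ' ^ n) t) := by
    intro t n c
    induction c with
    | zero => simp
    | succ c ih =>
      rw [show n + q * (c + 1) = (n + q * c) + q from by ring, hFper t (n + q * c), ih]
  -- points not fixed by σ' have period exactly q
  have hper : ∀ t : Fin k, σ' t ≠ t → ∀ c : ℕ, (σ' ^ c) t = t → q ∣ c := by
    intro t ht c hc
    have hpq : Function.IsPeriodicPt σ' q t := by
      show (⇑σ')^[q] t = t
      rw [Equiv.Perm.iterate_eq_pow, hσq]
      rfl
    have hpc : Function.IsPeriodicPt σ' c t := by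
      show (⇑σ')^[c] t = t
      rw [Equiv.Perm.iterate_eq_pow]
      exact hc
    rcases hqp.eq_one_or_self_of_dvd _ hpq.minimalPeriod_dvd with h1 | h2
    · exfalso
      have h := Function.isPeriodicPt_minimalPeriod σ' t
      rw [h1] at h
      simp [Function.IsPeriodicPt, Function.IsFixedPt] at h
      exact ht h
    · rw [← h2]
      exact hpc.minimalPeriod_dvd
  -- base points: fixed points of f t when σ' t = t
  have hfixex : ∀ t : Fin k, ∃ d : Δ, σ' t = t → (f t : Equiv.Perm Δ) d = d := by
    intro t
    by_cases ht : σ' t = t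
    · have hFtq : F t ^ q = 1 := (hpowfix t ht q).symm.trans (hgq1 t)
      have hftq : (f t) ^ q = 1 := by
        apply Subtype.ext
        push_cast
        exact hFtq
      rcases hqp.eq_one_or_self_of_dvd _ (orderOf_dvd_of_pow_eq_one hftq) with h1 | h2
      · refine ⟨Classical.arbitrary Δ, fun _ => ?_⟩
        rw [orderOf_eq_one_iff.mp h1]
        simp
      · obtain ⟨d, hd⟩ := hLel (f t) q hqp hqo h2
        exact ⟨d, fun _ => hd⟩
    · exact ⟨Classical.arbitrary Δ, fun h => absurd h ht⟩
  choose δ hδ using hfixex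
  -- well-definedness along an orbit
  have hG : ∀ (t : Fin k) (a b : ℕ), (σ' ^ a) t = (σ' ^ b) t →
      wrG F σ' a ((σ' ^ a) t) (δ t) = wrG F σ' b ((σ' ^ b) t) (δ t) := by
    intro t
    by_cases ht : σ' t = t
    · have hall : ∀ n : ℕ, (σ' ^ n) t = t := by
        intro n
        induction n with
        | zero => simp
        | succ n ih => rw [pow_succ, Equiv.Perm.mul_apply, ht, ih]
      have hfd : ∀ n : ℕ, wrG F σ' n t (δ t) = δ t := by
        intro n
        induction n with
        | zero => simp
        | succ n ih =>
          have ht' : σ'⁻¹ t = t := σ'.injective (by rw [Equiv.Perm.inv_def, Equiv.apply_symm_apply, ht])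
          rw [wrG_succ, Equiv.Perm.mul_apply, ht', ih]
          exact hδ t ht
      intro a b _
      rw [hall a, hall b, hfd a, hfd b]
    · have key : ∀ a b : ℕ, b ≤ a → (σ' ^ a) t = (σ' ^ b) t →
          wrG F σ' a ((σ' ^ a) t) (δ t) = wrG F σ' b ((σ' ^ b) t) (δ t) := by
        intro a b hba hab
        have h1 : (σ' ^ (a - b)) t = t := by
          apply (σ' ^ b).injective
          rw [← Equiv.Perm.mul_apply, ← pow_add, show b + (a - b) = a from by omega, hab]
        obtain ⟨c, hc⟩ := hper t ht (a - b) h1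
        have ha : a = b + q * c := by omega
        subst ha
        rw [hFper']
      intro a b hab
      rcases le_total b a with h | h
      · exact key a b h hab
      · exact (key b a h hab.symm).symm
  -- orbit equivalence relation and representatives
  have harith : ∀ n : ℕ, n * (q - 1) + n = n * q := by
    intro n
    obtain ⟨c, hc⟩ := Nat.exists_eq_succ_of_ne_zero hqpos.ne'
    subst hc
    simp [Nat.mul_succ]
  let srel : Setoid (Fin k) :=
    ⟨fun i j => ∃ n : ℕ, (σ' ^ n) j = i,
     ⟨fun i => ⟨0, by simp⟩,
      fun {i j} h => by
        obtain ⟨n, hn⟩ := h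
        refine ⟨n * (q - 1), ?_⟩
        rw [← hn, ← Equiv.Perm.mul_apply, ← pow_add, harith n, mul_comm, pow_mul, hσq, one_pow,
          Equiv.Perm.one_apply],
      fun {i j l} h h' => by
        obtain ⟨n, hn⟩ := h
        obtain ⟨n', hn'⟩ := h'
        exact ⟨n + n', by rw [pow_add, Equiv.Perm.mul_apply, hn', hn]⟩⟩⟩
  set r : Fin k → Fin k := fun i => (Quotient.mk srel i).out with hrdef
  have hrel : ∀ i : Fin k, ∃ n : ℕ, (σ' ^ n) (r i) = i := by
    intro i
    have h1 : srel.r (r i) i := Quotient.exact (Quotient.out_eq (Quotient.mk srel i))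
    exact srel.iseqv.symm h1
  choose m hm using hrel
  have hrσ : ∀ i : Fin k, r (σ'⁻¹ i) = r i := by
    intro i
    show (Quotient.mk srel (σ'⁻¹ i)).out = (Quotient.mk srel i).out
    congr 1
    apply Quotient.sound
    refine ⟨q - 1, ?_⟩
    apply σ'.injective
    rw [Equiv.Perm.inv_def, Equiv.apply_symm_apply, ← Equiv.Perm.mul_apply, ← pow_succ',
      show (q - 1) + 1 = q from by omega, hσq, Equiv.Perm.one_apply]
  -- the fixed point
  refine ⟨fun i => wrG F σ' (m i) ((σ' ^ (m i)) (r i)) (δ (r i)), ?_⟩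
  funext i
  rw [hw _ i]
  have hj : r (σ'⁻¹ i) = r i := hrσ i
  have hmj : (σ' ^ (m (σ'⁻¹ i))) (r i) = σ'⁻¹ i := by rw [← hj]; exact hm _
  have hstep : (σ' ^ (m (σ'⁻¹ i) + 1)) (r i) = i := by
    rw [pow_succ', Equiv.Perm.mul_apply, hmj, Equiv.Perm.inv_def, Equiv.apply_symm_apply]
  show (f i : Equiv.Perm Δ)
      (wrG F σ' (m (σ'⁻¹ i)) ((σ' ^ (m (σ'⁻¹ i))) (r (σ'⁻¹ i))) (δ (r (σ'⁻¹ i))))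
    = wrG F σ' (m i) ((σ' ^ (m i)) (r i)) (δ (r i))
  rw [hj]
  calc (f i : Equiv.Perm Δ) (wrG F σ' (m (σ'⁻¹ i)) ((σ' ^ (m (σ'⁻¹ i))) (r i)) (δ (r i)))
      = (F ((σ' ^ (m (σ'⁻¹ i) + 1)) (r i))
          * wrG F σ' (m (σ'⁻¹ i)) ((σ' ^ (m (σ'⁻¹ i))) (r i))) (δ (r i)) := by
        rw [Equiv.Perm.mul_apply, hstep]
    _ = wrG F σ' (m (σ'⁻¹ i) + 1) ((σ' ^ (m (σ'⁻¹ i) + 1)) (r i)) (δ (r i)) := by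
        rw [hD]
    _ = wrG F σ' (m i) ((σ' ^ (m i)) (r i)) (δ (r i)) := by
        exact hG (r i) _ _ (by rw [hstep, hm i])
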